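/- Let H, W, B, K, H', W', C be positive natural numbers with H' = H − K + 1 and W' = W − K + 1. Let N : Fin C → (Fin H × Fin W × Fin B → ℝ) be a family of input feature channels, let 𝒲 : Fin C → (Fin K × Fin K → ℝ) be the corresponding kernels, and let h : ℝ → ℝ. Define the output channel A : Fin H' × Fin W' × Fin B → ℝ by A(p₁,p₂,b) = ∑_{c∈Fin C} ∑_{u,v∈Fin K} h(N(c)(p₁+u, p₂+v, b)) · 𝒲(c)(u,v). Fix distinct indices i ≠ j in Fin C and define the pruned output A_p : Fin H' × Fin W' × Fin B → ℝ by A_p(p₁,p₂,b) = ∑_{u,v} h(N(j)(p₁+u, p₂+v, b)) · (𝒲(i)(u,v) + 𝒲(j)(u,v)) + ∑_{c ≠ i, j} ∑_{u,v} h(N(c)(p₁+u, p₂+v, b)) · 𝒲(c)(u,v). Then for every (p₁,p₂,b), A(p₁,p₂,b) − A_p(p₁,p₂,b) = ∑_{u,v} (h(N(i)(p₁+u, p₂+v, b)) − h(N(j)(p₁+u, p₂+v, b))) · 𝒲(i)(u,v); consequently, with n' = H'·W'·B, (1/n') ∑_{p₁,p₂,b} (A(p₁,p₂,b) − A_p(p₁,p₂,b))²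 = (1/n') ‖(h∘N(i) − h∘N(j)) ∗ 𝒲(i)‖₂². -/
import Mathlib


open Finset

set_option maxHeartbeats 1000000

/-- **Equation 7.** Pruning channel `N i` and absorbing its kernel `𝒲 i` into the kernel of a
substitute channel `N j` shifts the next layer's output by exactly the valid convolution of
`h ∘ N i − h ∘ N j` with `𝒲 i`; consequently the normalized squared L₂ shift equals
`(1/n') ‖(h∘N i − h∘N j) ∗ 𝒲 i‖₂²`. -/
theorem pruned_output_shift_eq_conv
    (H W B K H' W' C : ℕ) (hH : 0 < H) (hW : 0 < W) (hB : 0 < B) (hK : 0 < K)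
    (hH'pos : 0 < H') (hW'pos : 0 < W') (hC : 0 < C) (hKH : K ≤ H) (hKW : K ≤ W)
    (hH' : H' = H - K + 1) (hW' : W' = W - K + 1)
    (N : Fin C → (Fin H × Fin W × Fin B → ℝ))
    (𝒲 : Fin C → (Fin K × Fin K → ℝ))
    (h : ℝ → ℝ) (i j : Fin C) (hij : i ≠ j)
    (A Ap : Fin H' × Fin W' × Fin B → ℝ)
    (hA : ∀ (p₁ : Fin H') (p₂ : Fin W') (b : Fin B),
      A (p₁, p₂, b) = ∑ c : Fin C, ∑ u : Fin K, ∑ v : Fin K,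
        h (N c (⟨p₁.val + u.val, by have := p₁.isLt; have := u.isLt; omega⟩,
                ⟨p₂.val + v.val, by have := p₂.isLt; have := v.isLt; omega⟩, b)) * 𝒲 c (u, v))
    (hAp : ∀ (p₁ : Fin H') (p₂ : Fin W') (b : Fin B),
      Ap (p₁, p₂, b) =
        (∑ u : Fin K, ∑ v : Fin K,
          h (N j (⟨p₁.val + u.val, by have := p₁.isLt; have := u.isLt; omega⟩,
                  ⟨p₂.val + v.val, by have := p₂.isLt; have := v.isLt; omega⟩, b))
            * (𝒲 i (u, v) + 𝒲 j (u, v)))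
        + ∑ c ∈ Finset.univ \ {i, j}, ∑ u : Fin K, ∑ v : Fin K,
            h (N c (⟨p₁.val + u.val, by have := p₁.isLt; have := u.isLt; omega⟩,
                    ⟨p₂.val + v.val, by have := p₂.isLt; have := v.isLt; omega⟩, b))
              * 𝒲 c (u, v)) :
    (∀ (p₁ : Fin H') (p₂ : Fin W') (b : Fin B),
      A (p₁, p₂, b) - Ap (p₁, p₂, b)
        = ∑ u : Fin K, ∑ v : Fin K,
            (h (N i (⟨p₁.val + u.val, by have := p₁.isLt; have := u.isLt; omega⟩,
                     ⟨p₂.val + v.val, by have := p₂.isLt; have := v.isLt; omega⟩, b))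
              - h (N j (⟨p₁.val + u.val, by have := p₁.isLt; have := u.isLt; omega⟩,
                        ⟨p₂.val + v.val, by have := p₂.isLt; have := v.isLt; omega⟩, b)))
              * 𝒲 i (u, v)) ∧
    (1 / (H' * W' * B : ℝ)) * ∑ p : Fin H' × Fin W' × Fin B, (A p - Ap p) ^ 2
      = (1 / (H' * W' * B : ℝ)) * ∑ p : Fin H' × Fin W' × Fin B,
          (∑ u : Fin K, ∑ v : Fin K,
            (h (N i (⟨p.1.val + u.val, by have := p.1.isLt; have := u.isLt; omega⟩,
                     ⟨p.2.1.val + v.val, by have := p.2.1.isLt; have := v.isLt; omega⟩, p.2.2))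
              - h (N j (⟨p.1.val + u.val, by have := p.1.isLt; have := u.isLt; omega⟩,
                        ⟨p.2.1.val + v.val, by have := p.2.1.isLt; have := v.isLt; omega⟩, p.2.2)))
              * 𝒲 i (u, v)) ^ 2 := by

  have key : ∀ (p₁ : Fin H') (p₂ : Fin W') (b : Fin B),
      A (p₁, p₂, b) - Ap (p₁, p₂, b)
        = ∑ u : Fin K, ∑ v : Fin K,
            (h (N i (⟨p₁.val + u.val, by have := p₁.isLt; have := u.isLt; omega⟩,
                     ⟨p₂.val + v.val, by have := p₂.isLt; have := v.isLt; omega⟩, b))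
              - h (N j (⟨p₁.val + u.val, by have := p₁.isLt; have := u.isLt; omega⟩,
                        ⟨p₂.val + v.val, by have := p₂.isLt; have := v.isLt; omega⟩, b)))
              * 𝒲 i (u, v) := by
    intro p₁ p₂ b
    rw [hA, hAp]
    have hsplit : (∑ c : Fin C, ∑ u : Fin K, ∑ v : Fin K,
        h (N c (⟨p₁.val + u.val, by have := p₁.isLt; have := u.isLt; omega⟩,
                ⟨p₂.val + v.val, by have := p₂.isLt; have := v.isLt; omega⟩, b)) * 𝒲 c (u, v))
        = (∑ c ∈ Finset.univ \ {i, j}, ∑ u : Fin K, ∑ v : Fin K,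
            h (N c (⟨p₁.val + u.val, by have := p₁.isLt; have := u.isLt; omega⟩,
                    ⟨p₂.val + v.val, by have := p₂.isLt; have := v.isLt; omega⟩, b)) * 𝒲 c (u, v))
          + ∑ c ∈ ({i, j} : Finset (Fin C)), ∑ u : Fin K, ∑ v : Fin K,
            h (N c (⟨p₁.val + u.val, by have := p₁.isLt; have := u.isLt; omega⟩,
                    ⟨p₂.val + v.val, by have := p₂.isLt; have := v.isLt; omega⟩, b)) * 𝒲 c (u, v) := by
      rw [Finset.sum_sdiff (Finset.subset_univ _)]
    rw [hsplit, Finset.sum_pair hij]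
    have habc : ∀ (X Y Z R : ℝ), R + (X + Y) - (Z + R) = X + Y - Z := by intros; ring
    rw [habc]
    rw [← Finset.sum_add_distrib, ← Finset.sum_sub_distrib]
    apply Finset.sum_congr rfl
    intro u _
    rw [← Finset.sum_add_distrib, ← Finset.sum_sub_distrib]
    apply Finset.sum_congr rfl
    intro v _
    ring
  refine ⟨key, ?_⟩
  congr 1
  apply Finset.sum_congr rfl
  intro p _
  obtain ⟨p₁, p₂, b⟩ := p
  rw [key p₁ p₂ b]
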